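/- Let n ≥ 2, let A be a matrix on the boundary of the copositive cone C_n with at least k ≥ 2 strictly positive diagonal entries, and let M be completely positive with ⟨M, A⟩ = 0. Then cp-rank(M) ≤ C(n+1, 2) − k, i.e., at most n(n+1)/2 − k. -/

import Mathlib

open Matrix BigOperators

def Copositive {ι : Type} [Fintype ι] (A : Matrix ι ι ℝ) : Prop :=
  A.IsSymm ∧ ∀ x : ι → ℝ, (∀ i, 0 ≤ x i) → 0 ≤ x ⬝ᵥ A.mulVec x

def CompletelyPositive {ι : Type} [Fintype ι] (M : Matrix ι ι ℝ) : Prop :=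
  ∃ (p : ℕ) (v : Fin p → ι → ℝ), (∀ j i, 0 ≤ v j i) ∧
    M = ∑ j, Matrix.vecMulVec (v j) (v j)

noncomputable def cpRank {ι : Type} [Fintype ι] (M : Matrix ι ι ℝ) : ℕ :=
  sInf {p : ℕ | ∃ v : Fin p → ι → ℝ, (∀ j i, 0 ≤ v j i) ∧
    M = ∑ j, Matrix.vecMulVec (v j) (v j)}

noncomputable def pmax (n : ℕ) : ℕ :=
  sSup {k : ℕ | ∃ M : Matrix (Fin n) (Fin n) ℝ, CompletelyPositive M ∧ cpRank M = k}

def ExtremeCopositive {ι : Type} [Fintype ι] (A : Matrix ι ι ℝ) : Prop :=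
  Copositive A ∧ A ≠ 0 ∧ ∀ B C : Matrix ι ι ℝ, Copositive B → Copositive C → A = B + C →
    ∃ s t : ℝ, 0 ≤ s ∧ 0 ≤ t ∧ B = s • A ∧ C = t • A

def E12 (k : ℕ) : Matrix (Fin k) (Fin k) ℝ :=
  Matrix.of fun i j => if (i.val = 0 ∧ j.val = 1) ∨ (i.val = 1 ∧ j.val = 0) then 1 else 0

def InOrbitOfE12 {k : ℕ} (S : Matrix (Fin k) (Fin k) ℝ) : Prop :=
  ∃ (d : Fin k → ℝ) (σ : Equiv.Perm (Fin k)), (∀ i, 0 < d i) ∧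
    S = Matrix.diagonal d * (σ.permMatrix ℝ)ᵀ * E12 k * σ.permMatrix ℝ * Matrix.diagonal d



section MyAux

/-- From nonnegativity of `a + t*b` for all small positive `t`, conclude `0 ≤ a`. -/
lemma my_nonneg_of_small (a b ε : ℝ) (hε : 0 < ε)
    (h : ∀ t : ℝ, 0 < t → t < ε → 0 ≤ a + t * b) : 0 ≤ a := by
  by_contra hna
  push_neg at hna
  have hb1 : (0:ℝ) < |b| + 1 := by positivity
  set t := min (ε/2) (-a / (|b| + 1)) with ht
  have htpos : 0 < t := lt_min (by linarith) (div_pos (by linarith) hb1)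
  have htε : t < ε := lt_of_le_of_lt (min_le_left _ _) (by linarith)
  have h2 := h t htpos htε
  have h3 : t * b ≤ t * |b| := mul_le_mul_of_nonneg_left (le_abs_self b) htpos.le
  have h4 : t * |b| ≤ (-a / (|b|+1)) * |b| :=
    mul_le_mul_of_nonneg_right (min_le_right _ _) (abs_nonneg b)
  have h5 : (-a / (|b|+1)) * |b| < -a := by
    rw [div_mul_eq_mul_div, div_lt_iff₀ hb1]
    nlinarith [abs_nonneg b]
  linarith

/-- Carathéodory theorem for cones: a nonnegative combination of vectors lying in a
submodule `W` can be rewritten as a nonnegative combination of at most `finrank W` of them. -/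
lemma my_coneCarath {E : Type*} [AddCommGroup E] [Module ℝ E] [FiniteDimensional ℝ E]
    {ι : Type*} [DecidableEq ι] (W : Submodule ℝ E) (w : ι → E) :
    ∀ s : Finset ι, (∀ j ∈ s, w j ∈ W) → ∀ c : ι → ℝ, (∀ j ∈ s, 0 ≤ c j) →
      ∃ t ⊆ s, t.card ≤ Module.finrank ℝ W ∧ ∃ c' : ι → ℝ,
        (∀ j ∈ t, 0 ≤ c' j) ∧ ∑ j ∈ t, c' j • w j = ∑ j ∈ s, c j • w j := by
  intro s
  induction s using Finset.strongInduction with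
  | _ s ih =>
  intro hw c hc
  by_cases hcard : s.card ≤ Module.finrank ℝ W
  · exact ⟨s, Finset.Subset.refl s, hcard, c, hc, rfl⟩
  · push_neg at hcard
    have hni : ¬ LinearIndependent ℝ (fun j : {x // x ∈ s} => (⟨w j, hw j j.2⟩ : W)) := by
      intro h
      have hle := h.fintype_card_le_finrank
      rw [Fintype.card_coe] at hle
      omega
    rw [Fintype.not_linearIndependent_iff] at hni
    obtain ⟨g, hgsum, i0, hgi0⟩ := hni
    set G : ι → ℝ := fun j => if h : j ∈ s then g ⟨j, h⟩ else 0 with hG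
    have hGE : ∑ j ∈ s, G j • w j = 0 := by
      have h1 : ((∑ i : {x // x ∈ s}, g i • (⟨w i, hw i i.2⟩ : W) : W) : E) = 0 := by
        rw [hgsum]; rfl
      rw [Submodule.coe_sum] at h1
      simp only [SetLike.val_smul] at h1
      rw [← Finset.sum_coe_sort s (fun j => G j • w j)]
      rw [← h1]
      apply Finset.sum_congr rfl
      intro j _
      simp [hG, j.2]
    have hGi0 : G (i0 : ι) = g i0 := by simp [hG, i0.2]
    have hGne : G (i0 : ι) ≠ 0 := by rw [hGi0]; exact hgi0
    obtain ⟨g2, hg2sum, j0, hj0s, hj0pos⟩ :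
        ∃ g2 : ι → ℝ, ∑ j ∈ s, g2 j • w j = 0 ∧ ∃ j0 ∈ s, 0 < g2 j0 := by
      rcases lt_or_gt_of_ne hGne with hneg | hpos
      · refine ⟨-G, ?_, i0, i0.2, by simpa using hneg⟩
        simp only [Pi.neg_apply, neg_smul, Finset.sum_neg_distrib, hGE, neg_zero]
      · exact ⟨G, hGE, i0, i0.2, hpos⟩
    set P := s.filter (fun j => 0 < g2 j) with hP
    have hPne : P.Nonempty := ⟨j0, Finset.mem_filter.2 ⟨hj0s, hj0pos⟩⟩
    obtain ⟨j1, hj1P, hj1eq⟩ := Finset.exists_mem_eq_inf' hPne (fun j => c j / g2 j)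
    set r := P.inf' hPne (fun j => c j / g2 j) with hr
    have hj1s : j1 ∈ s := (Finset.mem_filter.1 hj1P).1
    have hj1pos : 0 < g2 j1 := (Finset.mem_filter.1 hj1P).2
    have hrnn : 0 ≤ r := by
      apply Finset.le_inf'
      intro j hj
      exact div_nonneg (hc j (Finset.mem_filter.1 hj).1) (Finset.mem_filter.1 hj).2.le
    set c2 : ι → ℝ := fun j => c j - r * g2 j with hc2
    have hc2nn : ∀ j ∈ s, 0 ≤ c2 j := by
      intro j hj
      by_cases hgj : 0 < g2 j
      · have hjP : j ∈ P := Finset.mem_filter.2 ⟨hj, hgj⟩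
        have h6 : r ≤ c j / g2 j := Finset.inf'_le _ hjP
        have h7 := (le_div_iff₀ hgj).1 h6
        simp only [hc2]; linarith
      · push_neg at hgj
        have h8 : r * g2 j ≤ 0 := mul_nonpos_of_nonneg_of_nonpos hrnn hgj
        have := hc j hj
        simp only [hc2]; linarith
    have hc2j1 : c2 j1 = 0 := by
      simp only [hc2, hj1eq]
      rw [div_mul_cancel₀ _ hj1pos.ne']
      ring
    have hsum2 : ∑ j ∈ s, c2 j • w j = ∑ j ∈ s, c j • w j := by
      simp only [hc2, sub_smul, Finset.sum_sub_distrib]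
      rw [sub_eq_self]
      simp only [← smul_smul, ← Finset.smul_sum, hg2sum, smul_zero]
    have herase : ∑ j ∈ s.erase j1, c2 j • w j = ∑ j ∈ s, c2 j • w j := by
      rw [← Finset.add_sum_erase s _ hj1s, hc2j1, zero_smul, zero_add]
    obtain ⟨t, hts, htc, c', hc', hsum'⟩ := ih (s.erase j1) (Finset.erase_ssubset hj1s)
      (fun j hj => hw j (Finset.mem_of_mem_erase hj)) c2
      (fun j hj => hc2nn j (Finset.mem_of_mem_erase hj))
    exact ⟨t, hts.trans (Finset.erase_subset _ _), htc, c', hc',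
      by rw [hsum', herase, hsum2]⟩

/-- The submodule of symmetric matrices. -/
def mySymSub (n : ℕ) : Submodule ℝ (Matrix (Fin n) (Fin n) ℝ) where
  carrier := {B | Bᵀ = B}
  add_mem' := by intro a b ha hb; simp only [Set.mem_setOf_eq] at *
                 rw [Matrix.transpose_add, ha, hb]
  zero_mem' := by simp
  smul_mem' := by intro c a ha; simp only [Set.mem_setOf_eq] at *
                  rw [Matrix.transpose_smul, ha]

/-- The linear functional `B ↦ (B * A) i i`. -/
def myTraFun (n : ℕ) (A : Matrix (Fin n) (Fin n) ℝ) (i : Fin n) :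
    Matrix (Fin n) (Fin n) ℝ →ₗ[ℝ] ℝ where
  toFun B := ∑ l, B i l * A l i
  map_add' := by intro B C; simp [Matrix.add_apply, add_mul, Finset.sum_add_distrib]
  map_smul' := by intro r B; simp [Matrix.smul_apply, Finset.mul_sum, mul_assoc]

lemma my_finrank_symSub_le (n : ℕ) :
    Module.finrank ℝ (mySymSub n) ≤ (n+1).choose 2 := by
  classical
  let φ : mySymSub n →ₗ[ℝ] (Sym2 (Fin n) → ℝ) :=
    { toFun := fun B s => (B : Matrix (Fin n) (Fin n) ℝ) s.out.1 s.out.2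
      map_add' := by intro a b; funext s; simp
      map_smul' := by intro r a; funext s; simp }
  have hinj : Function.Injective φ := by
    rw [← LinearMap.ker_eq_bot]
    rw [LinearMap.ker_eq_bot']
    intro B h
    apply Subtype.ext
    ext i j
    simp only [ZeroMemClass.coe_zero, Matrix.zero_apply]
    have hBs : (B : Matrix (Fin n) (Fin n) ℝ)ᵀ = (B : Matrix (Fin n) (Fin n) ℝ) := B.2
    have h1 : (B : Matrix (Fin n) (Fin n) ℝ) (Sym2.mk (i, j).1 (i, j).2).out.1 (Sym2.mk (i, j).1 (i, j).2).out.2 = 0 :=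
      congrFun h (Sym2.mk (i, j).1 (i, j).2)
    have h2 : Sym2.mk (Sym2.mk (i, j).1 (i, j).2).out.1 (Sym2.mk (i, j).1 (i, j).2).out.2 = Sym2.mk (i, j).1 (i, j).2 := Quot.out_eq _
    rw [Sym2.mk_eq_mk_iff] at h2
    rcases h2 with h2 | h2
    · rw [h2] at h1; exact h1
    · rw [h2] at h1
      calc (B : Matrix (Fin n) (Fin n) ℝ) i j
          = (B : Matrix (Fin n) (Fin n) ℝ)ᵀ j i := rfl
        _ = 0 := by rw [hBs]; exact h1
  have hle := LinearMap.finrank_le_finrank_of_injective hinj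
  rwa [Module.finrank_pi, Sym2.card, Fintype.card_fin] at hle

end MyAux

section MyAux2

lemma my_finrank_W_le {n k : ℕ} (A : Matrix (Fin n) (Fin n) ℝ)
    (S' : Finset (Fin n)) (hS' : ∀ i ∈ S', 0 < A i i) (hcard : S'.card = k) :
    Module.finrank ℝ ↥(mySymSub n ⊓ ⨅ i ∈ S', LinearMap.ker (myTraFun n A i)) + k
      ≤ (n+1).choose 2 := by
  classical
  set W := mySymSub n ⊓ ⨅ i ∈ S', LinearMap.ker (myTraFun n A i) with hW
  set F : {i // i ∈ S'} → Matrix (Fin n) (Fin n) ℝ :=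
    fun i => Matrix.single (i : Fin n) (i : Fin n) 1 with hF
  have hFind : LinearIndependent ℝ F := by
    rw [Fintype.linearIndependent_iff]
    intro g hg i
    have h1 := congrFun (congrFun hg (i : Fin n)) (i : Fin n)
    simp only [Matrix.sum_apply, Matrix.smul_apply, Matrix.zero_apply, hF] at h1
    rw [Finset.sum_eq_single i] at h1
    · simpa [Matrix.single] using h1
    · intro b _ hbi
      have : (b : Fin n) ≠ (i : Fin n) := fun h => hbi (Subtype.ext h)
      simp [Matrix.single, this]
    · intro h; exact absurd (Finset.mem_univ i) h
  set D := Submodule.span ℝ (Set.range F) with hD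
  have hDrank : Module.finrank ℝ D = k := by
    rw [hD, finrank_span_eq_card hFind, Fintype.card_coe, hcard]
  have hDsym : D ≤ mySymSub n := by
    rw [hD, Submodule.span_le]
    rintro _ ⟨i, rfl⟩
    show (F i)ᵀ = F i
    ext a b
    simp [hF, Matrix.single, and_comm]
  -- D consists of matrices supported on diagonal entries in S'
  have hDZ : ∀ B ∈ D, ∀ a b : Fin n, ¬(a = b ∧ a ∈ S') → B a b = 0 := by
    intro B hB
    let Z : Submodule ℝ (Matrix (Fin n) (Fin n) ℝ) :=
      { carrier := {B | ∀ a b : Fin n, ¬(a = b ∧ a ∈ S') → B a b = 0}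
        add_mem' := by
          intro x y hx hy a b hab
          simp only [Matrix.add_apply, hx a b hab, hy a b hab, add_zero]
        zero_mem' := by intro a b _; rfl
        smul_mem' := by
          intro r x hx a b hab
          simp only [Matrix.smul_apply, hx a b hab, smul_zero] }
    have hZ : D ≤ Z := by
      rw [hD, Submodule.span_le]
      rintro _ ⟨i, rfl⟩ a b hab
      show Matrix.single (i : Fin n) (i : Fin n) 1 a b = 0
      simp only [Matrix.single, Matrix.of_apply, ite_eq_right_iff, and_imp]
      rintro rfl rfl
      exact absurd ⟨rfl, i.2⟩ hab
    exact hZ hB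
  have hWD : W ⊓ D = ⊥ := by
    rw [eq_bot_iff]
    intro B hB
    have hBW : B ∈ W := (Submodule.mem_inf.1 hB).1
    have hBD : B ∈ D := (Submodule.mem_inf.1 hB).2
    rw [Submodule.mem_bot]
    ext a b
    simp only [Matrix.zero_apply]
    by_cases hab : a = b ∧ a ∈ S'
    · obtain ⟨rfl, haS⟩ := hab
      have hker : B ∈ LinearMap.ker (myTraFun n A a) := by
        have h2 := (Submodule.mem_inf.1 hBW).2
        simp only [Submodule.mem_iInf] at h2
        exact h2 a haS
      have h3 : myTraFun n A a B = 0 := hker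
      have h4 : (∑ l, B a l * A l a) = 0 := h3
      rw [Finset.sum_eq_single a] at h4
      · rcases mul_eq_zero.1 h4 with h5 | h5
        · exact h5
        · exact absurd h5 (hS' a haS).ne'
      · intro l _ hla
        rw [hDZ B hBD a l (fun hc => hla hc.1.symm), zero_mul]
      · intro h; exact absurd (Finset.mem_univ a) h
    · exact hDZ B hBD a b hab
  have hsup : W ⊔ D ≤ mySymSub n := sup_le inf_le_left hDsym
  have heq := Submodule.finrank_sup_add_finrank_inf_eq W D
  rw [hWD, finrank_bot] at heq
  have hmono := Submodule.finrank_mono hsup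
  have hsym := my_finrank_symSub_le n
  omega

end MyAux2

section MyAux3


lemma my_copositive_closed (n : ℕ) :
    IsClosed {B : Matrix (Fin n) (Fin n) ℝ | Copositive B} := by
  have hset : {B : Matrix (Fin n) (Fin n) ℝ | Copositive B} =
      {B : Matrix (Fin n) (Fin n) ℝ | Bᵀ = B} ∩
      ⋂ x ∈ {x : Fin n → ℝ | ∀ i, 0 ≤ x i},
        {B : Matrix (Fin n) (Fin n) ℝ | 0 ≤ x ⬝ᵥ B.mulVec x} := by
    ext B
    simp only [Set.mem_setOf_eq, Set.mem_inter_iff, Set.mem_iInter, Copositive, Matrix.IsSymm]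
  rw [hset]
  refine IsClosed.inter ?_ (isClosed_biInter fun x _ => ?_)
  · have hT : Continuous fun B : Matrix (Fin n) (Fin n) ℝ => Bᵀ := by
      let L : Matrix (Fin n) (Fin n) ℝ →ₗ[ℝ] Matrix (Fin n) (Fin n) ℝ :=
        { toFun := fun B => Bᵀ
          map_add' := fun a b => Matrix.transpose_add a b
          map_smul' := fun r a => Matrix.transpose_smul r a }
      exact L.continuous_of_finiteDimensional
    exact isClosed_eq hT continuous_id
  · have hq : Continuous fun B : Matrix (Fin n) (Fin n) ℝ => x ⬝ᵥ B.mulVec x := by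
      let L : Matrix (Fin n) (Fin n) ℝ →ₗ[ℝ] ℝ :=
        { toFun := fun B => x ⬝ᵥ B.mulVec x
          map_add' := fun a b => by
            show x ⬝ᵥ (a + b).mulVec x = x ⬝ᵥ a.mulVec x + x ⬝ᵥ b.mulVec x
            rw [Matrix.add_mulVec, dotProduct_add]
          map_smul' := fun r a => by
            show x ⬝ᵥ (r • a).mulVec x = r * (x ⬝ᵥ a.mulVec x)
            rw [Matrix.smul_mulVec, dotProduct_smul, smul_eq_mul] }
      exact L.continuous_of_finiteDimensional
    exact isClosed_le continuous_const hq

lemma my_compl_slack {n : ℕ} {A : Matrix (Fin n) (Fin n) ℝ} (hA : Copositive A)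
    {v : Fin n → ℝ} (hv : ∀ i, 0 ≤ v i) (hq : v ⬝ᵥ A.mulVec v = 0) (i : Fin n) :
    v i * A.mulVec v i = 0 := by
  classical
  have hAs : ∀ a b, A a b = A b a := fun a b => hA.1.apply b a
  set e : Fin n → ℝ := Pi.single i 1 with he
  have h2 : v ⬝ᵥ A.mulVec e = A.mulVec v i := by
    rw [he, Matrix.dotProduct_mulVec, dotProduct_single, mul_one]
    simp only [Matrix.vecMul, Matrix.mulVec, dotProduct]
    exact Finset.sum_congr rfl fun l _ => by rw [hAs l i, mul_comm]
  have h1 : e ⬝ᵥ A.mulVec v = A.mulVec v i := by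
    rw [he, single_dotProduct, one_mul]
  have h3 : e ⬝ᵥ A.mulVec e = A i i := by
    rw [he, single_dotProduct, one_mul]
    simp [Matrix.mulVec, dotProduct_single]
  have key : ∀ t : ℝ, (v + t • e) ⬝ᵥ A.mulVec (v + t • e)
      = t * (2 * A.mulVec v i) + t^2 * A i i := by
    intro t
    rw [Matrix.mulVec_add, Matrix.mulVec_smul, add_dotProduct, smul_dotProduct]
    simp only [dotProduct_add, dotProduct_smul, smul_eq_mul, h1, h2, h3, hq]
    ring
  have hcoord : ∀ (t : ℝ) (j : Fin n), (v + t • e) j = v j + t * e j := fun t j => rfl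
  have he0 : ∀ j, 0 ≤ e j := by
    intro j; rw [he]
    rcases eq_or_ne j i with rfl | hji
    · simp
    · simp [Pi.single_apply, hji]
  have hei : e i = 1 := by rw [he]; simp
  have he1 : ∀ j, e j ≤ 1 := by
    intro j; rw [he]
    rcases eq_or_ne j i with rfl | hji
    · simp
    · simp [Pi.single_apply, hji]
  have hnn : 0 ≤ A.mulVec v i := by
    have hmain := my_nonneg_of_small (2 * A.mulVec v i) (A i i) 1 one_pos ?_
    · linarith
    · intro t ht ht1
      have hx : ∀ j, 0 ≤ (v + t • e) j := by
        intro j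
        rw [hcoord]
        have := he0 j
        nlinarith [hv j]
      have hq2 := hA.2 _ hx
      rw [key t] at hq2
      nlinarith
  rcases eq_or_lt_of_le (hv i) with hvi | hvi
  · rw [← hvi, zero_mul]
  · have hnp : A.mulVec v i ≤ 0 := by
      have hmain := my_nonneg_of_small (-(2 * A.mulVec v i)) (A i i) (v i) hvi ?_
      · linarith
      · intro t ht htv
        have hx : ∀ j, 0 ≤ (v + (-t) • e) j := by
          intro j
          rw [hcoord]
          rcases eq_or_ne j i with rfl | hji
          · rw [hei]; linarith
          · have : e j = 0 := by rw [he]; simp [Pi.single_apply, hji]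
            rw [this]
            simpa using hv j
        have hq2 := hA.2 _ hx
        rw [key (-t)] at hq2
        nlinarith
    have hz : A.mulVec v i = 0 := le_antisymm hnp hnn
    rw [hz, mul_zero]

lemma my_trace_vecMulVec {n : ℕ} (A : Matrix (Fin n) (Fin n) ℝ) (u : Fin n → ℝ) :
    Matrix.trace ((Matrix.vecMulVec u u)ᵀ * A) = u ⬝ᵥ A.mulVec u := by
  simp only [Matrix.trace, Matrix.diag, Matrix.mul_apply, Matrix.transpose_apply,
    Matrix.vecMulVec_apply, dotProduct, Matrix.mulVec, Finset.mul_sum]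
  rw [Finset.sum_comm]
  exact Finset.sum_congr rfl fun i _ => Finset.sum_congr rfl fun l _ => by ring

end MyAux3

section MyMain



theorem stmt17 {n : ℕ} (hn : 2 ≤ n) (A M : Matrix (Fin n) (Fin n) ℝ)
    (hAbd : A ∈ frontier {B : Matrix (Fin n) (Fin n) ℝ | Copositive B})
    (k : ℕ) (hk : 2 ≤ k)
    (hdiag : k ≤ (Finset.univ.filter fun i => 0 < A i i).card)
    (hM : CompletelyPositive M) (horth : Matrix.trace (Mᵀ * A) = 0) :
    cpRank M ≤ (n + 1).choose 2 - k := by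
  classical
  -- A is copositive
  have hAcl := frontier_subset_closure hAbd
  rw [(my_copositive_closed n).closure_eq] at hAcl
  have hAcop : Copositive A := hAcl
  have hAs : ∀ a b, A a b = A b a := fun a b => hAcop.1.apply b a
  -- the representation
  obtain ⟨p, v, hvnn, hMrep⟩ := hM
  -- each quadratic form value vanishes
  have hqsum : ∑ j, v j ⬝ᵥ A.mulVec (v j) = 0 := by
    have h1 : Matrix.trace (Mᵀ * A) = ∑ j, v j ⬝ᵥ A.mulVec (v j) := by
      rw [hMrep, Matrix.transpose_sum, Matrix.sum_mul, Matrix.trace_sum]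
      exact Finset.sum_congr rfl fun j _ => my_trace_vecMulVec A (v j)
    rw [← h1, horth]
  have hq0 : ∀ j, v j ⬝ᵥ A.mulVec (v j) = 0 := by
    have := (Finset.sum_eq_zero_iff_of_nonneg
      (fun j _ => hAcop.2 (v j) (hvnn j))).1 hqsum
    exact fun j => this j (Finset.mem_univ j)
  -- choose S'
  obtain ⟨S', hS'sub, hS'card⟩ := Finset.exists_subset_card_eq hdiag
  have hS'pos : ∀ i ∈ S', 0 < A i i := fun i hi =>
    (Finset.mem_filter.1 (hS'sub hi)).2
  -- the subspace W
  set W := mySymSub n ⊓ ⨅ i ∈ S', LinearMap.ker (myTraFun n A i) with hW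
  -- membership of the rank-one matrices in W
  have hmem : ∀ j, Matrix.vecMulVec (v j) (v j) ∈ W := by
    intro j
    rw [hW, Submodule.mem_inf]
    constructor
    · show (Matrix.vecMulVec (v j) (v j))ᵀ = Matrix.vecMulVec (v j) (v j)
      ext a b
      simp only [Matrix.transpose_apply, Matrix.vecMulVec_apply]
      ring
    · simp only [Submodule.mem_iInf]
      intro i hi
      rw [LinearMap.mem_ker]
      show (∑ l, Matrix.vecMulVec (v j) (v j) i l * A l i) = 0
      have hslack := my_compl_slack hAcop (hvnn j) (hq0 j) i
      calc (∑ l, Matrix.vecMulVec (v j) (v j) i l * A l i)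
          = v j i * ∑ l, A i l * v j l := by
            rw [Finset.mul_sum]
            exact Finset.sum_congr rfl fun l _ => by
              rw [Matrix.vecMulVec_apply, hAs l i]; ring
        _ = v j i * A.mulVec (v j) i := rfl
        _ = 0 := hslack
  -- apply conic Caratheodory
  have hMuniv : M = ∑ j ∈ Finset.univ, (1:ℝ) • Matrix.vecMulVec (v j) (v j) := by
    rw [hMrep]; simp
  obtain ⟨t, hts, htcard, c', hc'nn, hc'sum⟩ :=
    my_coneCarath W (fun j => Matrix.vecMulVec (v j) (v j)) Finset.univ
      (fun j _ => hmem j) (fun _ => (1:ℝ)) (fun j _ => zero_le_one)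
  -- build the smaller representation
  set q := t.card with hqdef
  have htcardeq : Fintype.card {x // x ∈ t} = q := Fintype.card_coe t
  let e : {x // x ∈ t} ≃ Fin q := Fintype.equivFinOfCardEq htcardeq
  let u : Fin q → Fin n → ℝ := fun m => Real.sqrt (c' ↑(e.symm m)) • v ↑(e.symm m)
  have hunn : ∀ m i, 0 ≤ u m i := by
    intro m i
    show 0 ≤ Real.sqrt (c' ↑(e.symm m)) * v ↑(e.symm m) i
    exact mul_nonneg (Real.sqrt_nonneg _) (hvnn _ _)
  have hM2 : M = ∑ m, Matrix.vecMulVec (u m) (u m) := by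
    have hterm : ∀ x : {j // j ∈ t},
        Matrix.vecMulVec (u (e x)) (u (e x)) =
          c' ↑x • Matrix.vecMulVec (v ↑x) (v ↑x) := by
      intro x
      have hex : e.symm (e x) = x := e.symm_apply_apply x
      ext a b
      show (Real.sqrt (c' ↑(e.symm (e x))) * v ↑(e.symm (e x)) a) *
          (Real.sqrt (c' ↑(e.symm (e x))) * v ↑(e.symm (e x)) b) =
        c' ↑x * (v ↑x a * v ↑x b)
      rw [hex]
      have hcx : 0 ≤ c' ↑x := hc'nn _ x.2
      rw [mul_mul_mul_comm, Real.mul_self_sqrt hcx]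
    calc M = ∑ j ∈ t, c' j • Matrix.vecMulVec (v j) (v j) := by
            rw [hc'sum]; exact hMuniv
      _ = ∑ x : {j // j ∈ t}, c' ↑x • Matrix.vecMulVec (v ↑x) (v ↑x) :=
            (Finset.sum_coe_sort t _).symm
      _ = ∑ x : {j // j ∈ t}, Matrix.vecMulVec (u (e x)) (u (e x)) := by
            exact Finset.sum_congr rfl fun x _ => (hterm x).symm
      _ = ∑ m, Matrix.vecMulVec (u m) (u m) :=
            Fintype.sum_equiv e _ _ (fun x => rfl)
  -- conclude
  have hmemq : q ∈ {p : ℕ | ∃ v : Fin p → Fin n → ℝ, (∀ j i, 0 ≤ v j i) ∧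
      M = ∑ j, Matrix.vecMulVec (v j) (v j)} := ⟨u, hunn, hM2⟩
  have hle1 : cpRank M ≤ q := Nat.sInf_le hmemq
  have hle2 := my_finrank_W_le A S' hS'pos hS'card
  rw [← hW] at hle2
  omega

end MyMain
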